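/- arXiv:2605.06295 — 2 statements merged into one kernel-verified Lean document; each statement's English description precedes it below -/
import Mathlib

section
/- If the metagame ν(K) = φ_i(K ∪ {i}) has Möbius representation m_T(ν) = m_{T∪{i}}(v)/(|T|+1) for T ⊆ [d]\{i}, where m is the Möbius transform of the original game v, then the meta-Shapley value φ_{j→i} equals ∑_{S : i,j ∈ S} m_S(v)/(|S|(|S|-1)) for j ≠ i. -/
open Finset

lemma arith (n t : ℕ) (ht : t ≤ n) :
    ∑ k ∈ range (n - t + 1), ((n - t).choose k : ℝ) / ((n + 1) * n.choose (t + k)) = 1 / (t + 1) := by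
  have hC : ∀ k ∈ range (n - t + 1),
      ((n - t).choose k : ℝ) / ((n + 1) * n.choose (t + k))
        = ((t + k).choose t : ℝ) / ((n + 1) * n.choose t) := by
    intro k hk
    have hk' : t + k ≤ n := by
      have := mem_range.1 hk; omega
    have hid : n.choose (t + k) * (t + k).choose t = n.choose t * (n - t).choose k := by
      have := Nat.choose_mul (n := n) (Nat.le_add_right t k)
      simpa using this
    have h1 : (0:ℝ) < n.choose (t + k) := by
      exact_mod_cast Nat.cast_pos.2 (Nat.choose_pos hk')
    have h2 : (0:ℝ) < n.choose t := by
      exact_mod_cast Nat.cast_pos.2 (Nat.choose_pos ht)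
    have hidR : (n.choose (t + k) : ℝ) * (t + k).choose t = (n.choose t : ℝ) * (n - t).choose k := by
      exact_mod_cast congrArg (Nat.cast : ℕ → ℝ) hid
    field_simp
    nlinarith [hidR]
  rw [sum_congr rfl hC, ← sum_div, ← Nat.cast_sum]
  have hsum : ∑ k ∈ range (n - t + 1), (t + k).choose t = (n + 1).choose (t + 1) := by
    rw [← Nat.sum_Icc_choose]
    have : Icc t n = Ico t (n + 1) := by rw [Finset.Ico_add_one_right_eq_Icc]
    rw [this, Finset.sum_Ico_eq_sum_range]
    have : n + 1 - t = n - t + 1 := by omega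
    rw [this]
  rw [hsum]
  have hmul : ((n:ℝ) + 1) * n.choose t = (n + 1).choose (t + 1) * (t + 1) := by
    exact_mod_cast congrArg (Nat.cast : ℕ → ℝ) (Nat.add_one_mul_choose_eq n t)
  have hpos : (0:ℝ) < (n + 1).choose (t + 1) := by
    exact_mod_cast Nat.cast_pos.2 (Nat.choose_pos (by omega))
  rw [hmul]
  field_simp

lemma key {α : Type*} [DecidableEq α] (B T : Finset α) (hTB : T ⊆ B) :
    ∑ S ∈ B.powerset.filter (fun S => T ⊆ S),
      (1:ℝ) / ((B.card + 1) * (B.card.choose S.card)) = 1 / (T.card + 1) := by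
  have hbij : ∑ S ∈ B.powerset.filter (fun S => T ⊆ S),
      (1:ℝ) / ((B.card + 1) * (B.card.choose S.card))
      = ∑ R ∈ (B \ T).powerset, (1:ℝ) / ((B.card + 1) * (B.card.choose (T.card + R.card))) := by
    apply Finset.sum_bij' (fun S _ => S \ T) (fun R _ => T ∪ R)
    · intro S hS
      rw [mem_powerset]
      exact sdiff_subset_sdiff (mem_powerset.1 (mem_filter.1 hS).1) le_rfl
    · intro R hR
      rw [mem_filter, mem_powerset]
      exact ⟨union_subset hTB ((mem_powerset.1 hR).trans sdiff_subset), subset_union_left⟩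
    · intro S hS
      have h := (mem_filter.1 hS).2
      exact union_sdiff_of_subset h
    · intro R hR
      have hd : Disjoint T R := (disjoint_sdiff.mono_right (mem_powerset.1 hR))
      rw [union_sdiff_cancel_left hd]
    · intro S hS
      have h := (mem_filter.1 hS).2
      rw [card_sdiff_of_subset h, Nat.add_sub_cancel' (card_le_card h)]
  rw [hbij, sum_powerset_apply_card (fun m => (1:ℝ) / ((B.card + 1) * (B.card.choose (T.card + m))))]
  have hc : (B \ T).card = B.card - T.card := card_sdiff_of_subset hTB
  rw [hc]
  have := arith B.card T.card (card_le_card hTB)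
  rw [← this]
  apply sum_congr rfl
  intro k hk
  rw [nsmul_eq_mul]
  have hk' : T.card + k ≤ B.card := by have h1 := mem_range.1 hk; have h2 := card_le_card hTB; omega
  have h1 : (0:ℝ) < B.card.choose (T.card + k) := by
    exact_mod_cast Nat.cast_pos.2 (Nat.choose_pos hk')
  field_simp

lemma swap_powerset {α M : Type*} [DecidableEq α] [AddCommMonoid M] (B : Finset α)
    (F : Finset α → Finset α → M) :
    ∑ S ∈ B.powerset, ∑ T ∈ S.powerset, F S T
      = ∑ T ∈ B.powerset, ∑ S ∈ B.powerset.filter (fun S => T ⊆ S), F S T := by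
  have h1 : ∀ S ∈ B.powerset, ∑ T ∈ S.powerset, F S T
      = ∑ T ∈ B.powerset.filter (fun T => T ⊆ S), F S T := by
    intro S hS
    rw [mem_powerset] at hS
    apply sum_congr _ (fun _ _ => rfl)
    ext T
    simp only [mem_powerset, mem_filter]
    exact ⟨fun h => ⟨h.trans hS, h⟩, fun h => h.2⟩
  rw [sum_congr rfl h1]
  simp only [sum_filter]
  exact sum_comm

/-- Möbius transform of a cooperative game. -/
noncomputable def mobius {d : ℕ} (v : Finset (Fin d) → ℝ) (S : Finset (Fin d)) : ℝ :=
  ∑ T ∈ S.powerset, (-1 : ℝ) ^ (S.card - T.card) * v T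

/-- First-order Shapley value of `i` restricted to coalition `K` (containing `i`),
in Möbius representation: `φ_i^{SV}(K) = ∑_{S ⊆ K, i ∈ S} m_S(v)/|S|`. -/
noncomputable def phiSV {d : ℕ} (v : Finset (Fin d) → ℝ) (i : Fin d)
    (K : Finset (Fin d)) : ℝ :=
  ∑ S ∈ K.powerset.filter (fun S => i ∈ S), mobius v S / (S.card : ℝ)

/-- The metagame of `i`: the Shapley attribution of `i` when `i` and `K` are known. -/
noncomputable def metagame {d : ℕ} (v : Finset (Fin d) → ℝ) (i : Fin d)
    (K : Finset (Fin d)) : ℝ :=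
  phiSV v i (insert i K)

/-- Meta-Shapley value `φ_{j→i}`: the Shapley value of player `j`
in the metagame over the players `[d] \ {i}`. -/
noncomputable def metaSV {d : ℕ} (v : Finset (Fin d) → ℝ) (i j : Fin d) : ℝ :=
  ∑ S ∈ ((Finset.univ.erase i).erase j).powerset,
    ((1 : ℝ) / ((d - 1 : ℕ) * ((d - 2 : ℕ).choose S.card))) *
      (metagame v i (insert j S) - metagame v i S)

/-- If the metagame has the Möbius representation
`m_T(ν) = m_{T∪{i}}(v)/(|T|+1)`, then the Meta-Shapley value equals
`∑_{S : i,j ∈ S} m_S(v)/(|S|(|S|-1))`. -/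
theorem metaSV_mobius_representation {d : ℕ} (v : Finset (Fin d) → ℝ)
    (i j : Fin d) (hij : i ≠ j)
    (hrep : ∀ K ∈ (Finset.univ.erase i).powerset,
      metagame v i K =
        ∑ T ∈ K.powerset, mobius v (insert i T) / ((T.card : ℝ) + 1)) :
    metaSV v i j =
      ∑ S ∈ Finset.univ.powerset.filter (fun S => i ∈ S ∧ j ∈ S),
        mobius v S / ((S.card : ℝ) * ((S.card : ℝ) - 1)) := by
  classical
  set B := ((Finset.univ.erase i).erase j) with hBdef
  have hd2 : 2 ≤ d := by
    have : 1 < Fintype.card (Fin d) := Fintype.one_lt_card_iff.2 ⟨i, j, hij⟩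
    simp at this; omega
  have hjE : j ∈ (Finset.univ.erase i : Finset (Fin d)) :=
    mem_erase.2 ⟨hij.symm, mem_univ _⟩
  have hcardE : (Finset.univ.erase i : Finset (Fin d)).card = d - 1 := by
    rw [card_erase_of_mem (mem_univ i)]; simp
  have hcardB : B.card = d - 2 := by
    rw [hBdef, card_erase_of_mem hjE, hcardE]; omega
  have hjB : j ∉ B := notMem_erase _ _
  have hiB : i ∉ B := fun h => (notMem_erase i _) (mem_of_mem_erase h)
  -- Step 1: expand the difference into a single sum over T ⊆ S
  have step1 : metaSV v i j = ∑ S ∈ B.powerset, ∑ T ∈ S.powerset,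
      ((1 : ℝ) / ((d - 1 : ℕ) * ((d - 2 : ℕ).choose S.card))) *
        (mobius v (insert i (insert j T)) / (((T.card : ℝ) + 1) + 1)) := by
    unfold metaSV
    apply sum_congr rfl
    intro S hS
    have hSB : S ⊆ B := mem_powerset.1 hS
    have hSE : S ⊆ Finset.univ.erase i := hSB.trans (erase_subset _ _)
    have hjS : j ∉ S := fun h => hjB (hSB h)
    have hins : insert j S ⊆ Finset.univ.erase i := insert_subset hjE hSE
    rw [hrep _ (mem_powerset.2 hins), hrep _ (mem_powerset.2 hSE)]
    have hdisj : Disjoint S.powerset (S.powerset.image (insert j ·)) := by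
      rw [disjoint_left]
      intro X hX hX'
      obtain ⟨Y, hY, rfl⟩ := mem_image.1 hX'
      exact hjS (mem_powerset.1 hX (mem_insert_self j Y))
    rw [powerset_insert, sum_union hdisj]
    rw [sum_image (fun T₁ h₁ T₂ h₂ h => by
      have hj1 : j ∉ T₁ := fun hh => hjS (mem_powerset.1 h₁ hh)
      have hj2 : j ∉ T₂ := fun hh => hjS (mem_powerset.1 h₂ hh)
      rw [← erase_insert hj1, ← erase_insert hj2, h])]
    rw [add_sub_cancel_left, mul_sum]
    apply sum_congr rfl
    intro T hT
    have hjT : j ∉ T := fun hh => hjS (mem_powerset.1 hT hh)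
    rw [card_insert_of_notMem hjT]
    push_cast
    ring
  rw [step1, swap_powerset]
  -- Step 2: evaluate the inner sum via the key counting identity
  have hcast : ((d - 1 : ℕ) : ℝ) = ((d - 2 : ℕ) : ℝ) + 1 := by
    have h : d - 1 = (d - 2) + 1 := by omega
    rw [h]; push_cast; ring
  have step2 : ∀ T ∈ B.powerset,
      ∑ S ∈ B.powerset.filter (fun S => T ⊆ S),
        ((1 : ℝ) / ((d - 1 : ℕ) * ((d - 2 : ℕ).choose S.card))) *
          (mobius v (insert i (insert j T)) / (((T.card : ℝ) + 1) + 1))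
        = (1 / ((T.card : ℝ) + 1)) *
          (mobius v (insert i (insert j T)) / (((T.card : ℝ) + 1) + 1)) := by
    intro T hT
    rw [← sum_mul]
    congr 1
    have := key B T (mem_powerset.1 hT)
    rw [hcardB] at this
    rw [← this]
    apply sum_congr rfl
    intro S hS
    rw [hcast]
  rw [sum_congr rfl step2]
  -- Step 3: bijection T ↦ insert i (insert j T)
  refine Finset.sum_bij' (fun T _ => insert i (insert j T))
    (fun S _ => (S.erase i).erase j) ?_ ?_ ?_ ?_ ?_
  · intro T hT
    simp only [mem_filter, mem_powerset]
    exact ⟨subset_univ _, mem_insert_self _ _, mem_insert_of_mem (mem_insert_self _ _)⟩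
  · intro S hS
    rw [mem_powerset, hBdef]
    exact erase_subset_erase _ (erase_subset_erase _ (subset_univ _))
  · intro T hT
    have hTB : T ⊆ B := mem_powerset.1 hT
    have hiT : i ∉ insert j T := by
      simp only [mem_insert]
      push_neg
      exact ⟨hij, fun h => hiB (hTB h)⟩
    have hjT : j ∉ T := fun h => hjB (hTB h)
    show ((insert i (insert j T)).erase i).erase j = T
    rw [erase_insert hiT, erase_insert hjT]
  · intro S hS
    have h := (mem_filter.1 hS).2
    have hjSe : j ∈ S.erase i := mem_erase.2 ⟨Ne.symm hij, h.2⟩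
    show insert i (insert j ((S.erase i).erase j)) = S
    rw [insert_erase hjSe, insert_erase h.1]
  · intro T hT
    have hTB : T ⊆ B := mem_powerset.1 hT
    have hjT : j ∉ T := fun h => hjB (hTB h)
    have hiT : i ∉ insert j T := by
      simp only [mem_insert]
      push_neg
      exact ⟨hij, fun h => hiB (hTB h)⟩
    have hcd : (insert i (insert j T)).card = T.card + 2 := by
      rw [card_insert_of_notMem hiT, card_insert_of_notMem hjT]
    show (1 / ((T.card : ℝ) + 1)) * (mobius v (insert i (insert j T)) / (((T.card : ℝ) + 1) + 1))
      = mobius v (insert i (insert j T)) /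
        (((insert i (insert j T)).card : ℝ) * (((insert i (insert j T)).card : ℝ) - 1))
    rw [hcd, div_mul_div_comm, one_mul]
    congr 1
    push_cast
    ring
end

section
/- The serial application of integrated gradients (integrated Hessians) to f(x) = x₁ + x₁x₂² leaks interaction into the diagonal: ψ₂,₂^{IH}(x) = (4/9)x₁x₂² ≠ 0, although the pure individual effect of x₂ is zero (the Möbius coefficient m_{{2}} = 0). -/
noncomputable def f (a b : ℝ) : ℝ := a + a * b ^ 2

noncomputable def ig2 (g : ℝ → ℝ → ℝ) (x1 x2 : ℝ) : ℝ :=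
  x2 * ∫ α in (0:ℝ)..1, deriv (fun t => g (α * x1) t) (α * x2)

lemma ig2_f (a b : ℝ) : ig2 f a b = 2 / 3 * (a * b ^ 2) := by
  have h1 : ∀ α : ℝ, deriv (fun t => f (α * a) t) (α * b) = α * a * (2 * (α * b)) := by
    intro α
    have : (fun t : ℝ => f (α * a) t) = fun t => α * a + α * a * t ^ 2 := by
      funext t; simp [f]
    rw [this]
    simp
  simp only [ig2, h1]
  have : (∫ α in (0:ℝ)..1, α * a * (2 * (α * b))) = ∫ α in (0:ℝ)..1, (2 * a * b) * α ^ 2 := by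
    congr 1; funext α; ring
  rw [this, intervalIntegral.integral_const_mul, integral_pow]
  ring

noncomputable def maskedGame (x1 x2 : ℝ) (S : Finset (Fin 2)) : ℝ :=
  f (if 0 ∈ S then x1 else 0) (if 1 ∈ S then x2 else 0)

/-- Integrated Hessians leak interaction into the diagonal:
`ψ₂,₂^{IH}(x) = φ₂^{IG}(φ₂^{IG}(f,·), x) = (4/9)x₁x₂²`, which is nonzero
whenever `x₁x₂ ≠ 0`, even though the pure individual effect of feature 2
vanishes (`m_{{2}} = v({2}) - v(∅) = 0`). -/
theorem integrated_hessian_diagonal_leakage (x1 x2 : ℝ) :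
    ig2 (fun a b => ig2 f a b) x1 x2 = (4 / 9) * (x1 * x2 ^ 2) ∧
    (x1 * x2 ≠ 0 → (4 / 9) * (x1 * x2 ^ 2) ≠ 0) ∧
    maskedGame x1 x2 {1} - maskedGame x1 x2 ∅ = 0 := by
  refine ⟨?_, ?_, ?_⟩
  · have h1 : ∀ α : ℝ, deriv (fun t => ig2 f (α * x1) t) (α * x2)
        = 4 / 3 * x1 * x2 * α ^ 2 := by
      intro α
      have : (fun t : ℝ => ig2 f (α * x1) t) = fun t => 2 / 3 * (α * x1) * t ^ 2 := by
        funext t; rw [ig2_f]; ring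
      rw [this]
      simp
      ring
    rw [ig2]
    simp only [h1]
    rw [intervalIntegral.integral_const_mul, integral_pow]
    ring
  · intro h
    intro hc
    apply h
    have : x1 * x2 ^ 2 = 0 := by linarith [mul_eq_zero.mp hc]
    rcases mul_eq_zero.mp this with h1 | h2
    · simp [h1]
    · simp [pow_eq_zero_iff] at h2; simp [h2]
  · simp [maskedGame, f]
end
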